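/- arXiv:2001.07314 — 2 statements merged into one kernel-verified Lean document; each statement's English description precedes it below -/
import Mathlib

section
/- For every $\eta$ with $1<\eta\le 2$ there exists a constant $C_\eta>0$ such that for all real numbers $a,b$, $|a-b|^{\eta} \le C_{\eta}\big((|a|^{\eta-2}a-|b|^{\eta-2}b)(a-b)\big)^{\eta/2}\big(|a|^{\eta}+|b|^{\eta}\big)^{(2-\eta)/2}$. -/
open Real

lemma myphi (η : ℝ) (hη : 1 < η) {x : ℝ} (hx : 0 ≤ x) : x ^ (η-2) * x = x ^ (η-1) := by
  rcases hx.eq_or_lt with h|h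
  · rw [← h]; simp [Real.zero_rpow (show η - 1 ≠ 0 by intro h; linarith)]
  · rw [show η-1 = η-2+1 by ring, Real.rpow_add h, Real.rpow_one]

lemma mybern (η : ℝ) (hη : 1 < η) (hη2 : η ≤ 2) {a b : ℝ} (hb : 0 ≤ b) (hba : b ≤ a) :
    (η-1) * a^(η-2) * (a-b) ≤ a^(η-1) - b^(η-1) := by
  have ha : 0 ≤ a := hb.trans hba
  rcases ha.eq_or_lt with h|h
  · have hb0 : b = 0 := le_antisymm (h ▸ hba) hb
    subst hb0; rw [← h]; simp
  · have ht0 : 0 ≤ b / a := div_nonneg hb h.le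
    have key := rpow_one_add_le_one_add_mul_self (s := b/a - 1) (p := η - 1)
      (by linarith) (by linarith) (by linarith)
    rw [show (1 : ℝ) + (b/a - 1) = b/a by ring] at key
    have hB : b ^ (η-1) = a^(η-1) * (b/a)^(η-1) := by
      rw [← Real.mul_rpow h.le ht0]
      congr 1
      field_simp
    have hA : a^(η-1) = a * a^(η-2) := by
      rw [show η-1 = 1+(η-2) by ring, Real.rpow_add h, Real.rpow_one]
    have hP : (0:ℝ) ≤ a ^ (η-1) := Real.rpow_nonneg ha _
    have key2 : b ^ (η-1) ≤ a^(η-1) * (1 + (η-1)*(b/a-1)) := by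
      rw [hB]; exact mul_le_mul_of_nonneg_left key hP
    have expand : a^(η-1) * (1 + (η-1)*(b/a-1)) = a^(η-1) + (η-1)*a^(η-2)*(b-a) := by
      rw [hA]; field_simp
    rw [expand] at key2
    linarith

lemma myKnn (η : ℝ) (hη : 1 < η) (hη2 : η ≤ 2) {a b : ℝ} (hb : 0 ≤ b) (hba : b ≤ a) :
    (η-1)/2 * (a+b)^(η-2) * (a-b)^2 ≤ (a^(η-2)*a - b^(η-2)*b) * (a-b) := by
  have ha : 0 ≤ a := hb.trans hba
  rcases ha.eq_or_lt with h|h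
  · have hb0 : b = 0 := le_antisymm (h ▸ hba) hb
    subst hb0; rw [← h]; simp
  · rw [myphi η hη h.le, myphi η hη hb]
    have hbern := mybern η hη hη2 hb hba
    have hmono : (a+b)^(η-2) ≤ a^(η-2) :=
      Real.rpow_le_rpow_of_nonpos h (by linarith) (by linarith)
    have h1 : 0 ≤ a - b := by linarith
    have h2 : (0:ℝ) ≤ a^(η-2) := Real.rpow_nonneg ha _
    have h3 : (0:ℝ) ≤ (a+b)^(η-2) := Real.rpow_nonneg (by linarith) _
    have hq : (0:ℝ) < η - 1 := by linarith
    have H1 := mul_le_mul_of_nonneg_left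
      (mul_le_mul_of_nonneg_right hmono (sq_nonneg (a-b))) hq.le
    have H2 := mul_le_mul_of_nonneg_right hbern h1
    have H3 : (0:ℝ) ≤ (η-1) * (a^(η-2) * (a-b)^2) := by positivity
    nlinarith [H1, H2, H3]

lemma myKmix (η : ℝ) (hη : 1 < η) (hη2 : η ≤ 2) {a c : ℝ} (ha : 0 ≤ a) (hc : 0 ≤ c) :
    (η-1)/2 * (a+c)^(η-1) ≤ a^(η-1) + c^(η-1) := by
  wlog h : c ≤ a generalizing a c
  · rw [add_comm a c, add_comm (a^(η-1))]; exact this hc ha (le_of_not_ge h)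
  have h2 : (a+c)/2 ≤ a := by linarith
  have key : ((a+c)/2)^(η-1) ≤ a^(η-1) := Real.rpow_le_rpow (by positivity) h2 (by linarith)
  have e1 : ((a+c)/2)^(η-1) = (a+c)^(η-1) / 2^(η-1) := Real.div_rpow (by linarith : (0:ℝ) ≤ a + c) (by norm_num : (0:ℝ) ≤ 2) (η-1)
  have e2 : (2:ℝ)^(η-1) ≤ 2 := by
    calc (2:ℝ)^(η-1) ≤ 2^(1:ℝ) :=
          Real.rpow_le_rpow_of_exponent_le (by norm_num) (by linarith)
    _ = 2 := Real.rpow_one 2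
  have h3 : (0:ℝ) ≤ (a+c)^(η-1) := Real.rpow_nonneg (by linarith) _
  have h4 : (a+c)^(η-1)/2 ≤ (a+c)^(η-1)/2^(η-1) := by
    gcongr
  have h5 : (η-1)*(a+c)^(η-1) ≤ 1*(a+c)^(η-1) :=
    mul_le_mul_of_nonneg_right (by linarith) h3
  have h6 : (0:ℝ) ≤ c^(η-1) := Real.rpow_nonneg hc _
  linarith

lemma mykeyK (η : ℝ) (hη : 1 < η) (hη2 : η ≤ 2) {a b : ℝ} (hab : b ≤ a) :
    (η-1)/2 * (|a|+|b|)^(η-2) * (a-b)^2 ≤ (|a|^(η-2)*a - |b|^(η-2)*b) * (a-b) := by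
  rcases le_total 0 b with hb | hb
  · have ha : 0 ≤ a := hb.trans hab
    rw [abs_of_nonneg ha, abs_of_nonneg hb]
    exact myKnn η hη hη2 hb hab
  · rcases le_total a 0 with ha | ha
    · -- b ≤ a ≤ 0
      have key := myKnn η hη hη2 (b := -a) (a := -b) (by linarith) (by linarith)
      rw [abs_of_nonpos ha, abs_of_nonpos hb]
      have e1 : (-b + -a) = -a + -b := by ring
      have e3 : (-b - -a) = a - b := by ring
      rw [e1, e3] at key
      nlinarith [key]
    · -- b ≤ 0 ≤ a
      rw [abs_of_nonneg ha, abs_of_nonpos hb]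
      rcases eq_or_lt_of_le (show (0:ℝ) ≤ a - b by linarith) with h0|h0
      · rw [← h0]; simp
      · have hmix := myKmix η hη hη2 ha (show (0:ℝ) ≤ -b by linarith)
        have hphia : a^(η-2)*a = a^(η-1) := myphi η hη ha
        have hphib : (-b)^(η-2)*(-b) = (-b)^(η-1) := myphi η hη (by linarith)
        have hphid : (a-b)^(η-2)*(a-b) = (a-b)^(η-1) := myphi η hη h0.le
        have eab : a + -b = a - b := by ring
        rw [eab] at hmix
        have hmul := mul_le_mul_of_nonneg_right hmix h0.le
        -- hmul : (η-1)/2 * (a-b)^(η-1) * (a-b) ≤ (a^(η-1) + (-b)^(η-1)) * (a-b)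
        have eL : (η-1)/2 * (a-b)^(η-2) * (a-b)^2 = (η-1)/2 * (a-b)^(η-1) * (a-b) := by
          linear_combination ((η-1)/2*(a-b)) * hphid
        have eR : (a^(η-2)*a - (-b)^(η-2)*b) * (a-b) = (a^(η-1) + (-b)^(η-1)) * (a-b) := by
          linear_combination (a-b)*hphia + (a-b)*hphib
        rw [eab, eL, eR]
        exact hmul


theorem stmt1 (η : ℝ) (hη : 1 < η) (hη2 : η ≤ 2) :
    ∃ C : ℝ, 0 < C ∧ ∀ a b : ℝ,
      |a - b| ^ η ≤ C * ((|a| ^ (η - 2) * a - |b| ^ (η - 2) * b) * (a - b)) ^ (η / 2)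
        * (|a| ^ η + |b| ^ η) ^ ((2 - η) / 2) := by
  have hq : (0:ℝ) < (η-1)/2 := by linarith
  refine ⟨((η-1)/2)^(-(η/2)) * 2^(η*(2-η)/2), by positivity, ?_⟩
  intro a b
  by_cases hab : a = b
  · subst hab
    simp [Real.zero_rpow (show η ≠ 0 by linarith),
      Real.zero_rpow (show η/2 ≠ 0 by intro h; nlinarith)]
  · have hs : (0:ℝ) < |a| + |b| := by
      rcases eq_or_ne a 0 with h|h
      · subst h
        have hb : b ≠ 0 := fun hb => hab (by rw [hb])
        have := abs_pos.mpr hb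
        simp only [abs_zero, zero_add]
        exact this
      · nlinarith [abs_pos.mpr h, abs_nonneg b]
    have hd : (0:ℝ) < |a - b| := abs_pos.mpr (sub_ne_zero.mpr hab)
    -- key lower bound
    have h1 : (η-1)/2 * (|a|+|b|)^(η-2) * (a-b)^2
        ≤ (|a|^(η-2)*a - |b|^(η-2)*b) * (a-b) := by
      rcases le_total b a with h|h
      · exact mykeyK η hη hη2 h
      · have := mykeyK η hη hη2 (a := b) (b := a) h
        rw [add_comm |b| |a|] at this
        nlinarith [this]
    have hL0 : (0:ℝ) ≤ (η-1)/2 * (|a|+|b|)^(η-2) * (a-b)^2 := by positivity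
    have h2 := Real.rpow_le_rpow hL0 h1 (by linarith : (0:ℝ) ≤ η/2)
    have hd2 : ((a-b)^2 : ℝ)^(η/2) = |a-b|^η := by
      rw [← sq_abs, ← Real.rpow_natCast |a-b| 2, ← Real.rpow_mul (abs_nonneg _),
        show ((2:ℕ):ℝ)*(η/2) = η by push_cast; ring]
    have h3 : ((η-1)/2 * (|a|+|b|)^(η-2) * (a-b)^2)^(η/2)
        = ((η-1)/2)^(η/2) * (|a|+|b|)^((η-2)*(η/2)) * |a-b|^η := by
      rw [Real.mul_rpow (mul_nonneg hq.le (Real.rpow_nonneg hs.le _)) (sq_nonneg _),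
        Real.mul_rpow hq.le (Real.rpow_nonneg hs.le _), hd2,
        ← Real.rpow_mul hs.le]
    -- sum lower bound
    have h4 : (2:ℝ)^(-η) * (|a|+|b|)^η ≤ |a|^η + |b|^η := by
      have hη0 : (0:ℝ) ≤ η := by linarith
      have key : ∀ x y : ℝ, 0 ≤ x → 0 ≤ y → x ≤ y →
          (2:ℝ)^(-η) * (x+y)^η ≤ x^η + y^η := by
        intro x y hx hy hxy
        have hxy2 : x + y ≤ 2*y := by linarith
        calc (2:ℝ)^(-η) * (x+y)^η ≤ (2:ℝ)^(-η) * (2*y)^η :=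
              mul_le_mul_of_nonneg_left
                (Real.rpow_le_rpow (by linarith) hxy2 hη0)
                (Real.rpow_nonneg (by norm_num) _)
        _ = (2:ℝ)^(-η) * ((2:ℝ)^η * y^η) := by
              rw [Real.mul_rpow (by norm_num) hy]
        _ = y^η := by
              rw [← mul_assoc, ← Real.rpow_add (by norm_num : (0:ℝ) < 2)]
              simp
        _ ≤ x^η + y^η := le_add_of_nonneg_left (Real.rpow_nonneg hx _)
      rcases le_total |a| |b| with h|h
      · exact key _ _ (abs_nonneg a) (abs_nonneg b) h
      · have := key _ _ (abs_nonneg b) (abs_nonneg a) h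
        rw [add_comm |b| |a|] at this
        linarith
    have h5 := Real.rpow_le_rpow (by positivity) h4 (by linarith : (0:ℝ) ≤ (2-η)/2)
    have h6 : ((2:ℝ)^(-η) * (|a|+|b|)^η)^((2-η)/2)
        = (2:ℝ)^((-η)*((2-η)/2)) * (|a|+|b|)^(η*((2-η)/2)) := by
      rw [Real.mul_rpow (Real.rpow_nonneg (by norm_num) _) (Real.rpow_nonneg hs.le _),
        ← Real.rpow_mul (by norm_num : (0:ℝ) ≤ 2), ← Real.rpow_mul hs.le]
    rw [h3] at h2
    rw [h6] at h5
    -- constant cancellations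
    have c1 : ((η-1)/2)^(-(η/2)) * ((η-1)/2)^(η/2) = 1 := by
      rw [← Real.rpow_add hq]; simp
    have c2 : (2:ℝ)^(η*(2-η)/2) * (2:ℝ)^((-η)*((2-η)/2)) = 1 := by
      rw [← Real.rpow_add (by norm_num : (0:ℝ) < 2),
        show η*(2-η)/2 + (-η)*((2-η)/2) = 0 by ring, Real.rpow_zero]
    have c3 : (|a|+|b|)^((η-2)*(η/2)) * (|a|+|b|)^(η*((2-η)/2)) = 1 := by
      rw [← Real.rpow_add hs, show (η-2)*(η/2) + η*((2-η)/2) = 0 by ring, Real.rpow_zero]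
    have E : ((η-1)/2)^(-(η/2)) * 2^(η*(2-η)/2)
          * (((η-1)/2)^(η/2) * (|a|+|b|)^((η-2)*(η/2)) * |a-b|^η)
          * ((2:ℝ)^((-η)*((2-η)/2)) * (|a|+|b|)^(η*((2-η)/2)))
        = |a-b|^η := by
      calc ((η-1)/2)^(-(η/2)) * 2^(η*(2-η)/2)
          * (((η-1)/2)^(η/2) * (|a|+|b|)^((η-2)*(η/2)) * |a-b|^η)
          * ((2:ℝ)^((-η)*((2-η)/2)) * (|a|+|b|)^(η*((2-η)/2)))
          = (((η-1)/2)^(-(η/2)) * ((η-1)/2)^(η/2))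
            * ((2:ℝ)^(η*(2-η)/2) * (2:ℝ)^((-η)*((2-η)/2)))
            * ((|a|+|b|)^((η-2)*(η/2)) * (|a|+|b|)^(η*((2-η)/2)))
            * |a-b|^η := by ring
      _ = |a-b|^η := by rw [c1, c2, c3]; ring
    calc |a-b|^η = _ := E.symm
    _ ≤ ((η-1)/2)^(-(η/2)) * 2^(η*(2-η)/2)
          * ((|a|^(η-2)*a - |b|^(η-2)*b) * (a-b))^(η/2)
          * (|a|^η + |b|^η)^((2-η)/2) := by
        have hC : (0:ℝ) ≤ ((η-1)/2)^(-(η/2)) * 2^(η*(2-η)/2) :=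
          mul_nonneg (Real.rpow_nonneg hq.le _) (Real.rpow_nonneg (by norm_num) _)
        have hM : (0:ℝ) ≤ ((η-1)/2)^(η/2) * (|a|+|b|)^((η-2)*(η/2)) * |a-b|^η :=
          mul_nonneg (mul_nonneg (Real.rpow_nonneg hq.le _) (Real.rpow_nonneg hs.le _))
            (Real.rpow_nonneg (abs_nonneg _) _)
        have hS : (0:ℝ) ≤ (2:ℝ)^((-η)*((2-η)/2)) * (|a|+|b|)^(η*((2-η)/2)) :=
          mul_nonneg (Real.rpow_nonneg (by norm_num) _) (Real.rpow_nonneg hs.le _)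
        exact mul_le_mul (mul_le_mul_of_nonneg_left h2 hC) h5 hS
          (mul_nonneg hC (hM.trans h2))
end

section
/- Let $g:\mathbb{R}\to\mathbb{R}$ be nondecreasing and locally Lipschitz, let $p>1$, and define $G(t)=\int_0^t g'(s)^{1/p}\,ds$. Then for all $a,b\in\mathbb{R}$, $|a-b|^{p-2}(a-b)\big(g(a)-g(b)\big)\ge |G(a)-G(b)|^p$. -/
open Real intervalIntegral

open MeasureTheory Set Filter Topology ENNReal in
lemma my_deriv_nonneg {g : ℝ → ℝ} (hg : Monotone g) (x : ℝ) : 0 ≤ deriv g x := by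
  by_cases h : DifferentiableAt ℝ g x
  · have h1 : Tendsto (slope g x) (𝓝[≠] x) (𝓝 (deriv g x)) :=
      hasDerivAt_iff_tendsto_slope.1 h.hasDerivAt
    refine ge_of_tendsto h1 ?_
    filter_upwards [self_mem_nhdsWithin] with y hy
    rcases lt_or_gt_of_ne (hy : y ≠ x) with h' | h'
    · rw [slope_def_field]
      exact div_nonneg_of_nonpos (by simpa using hg h'.le) (by linarith)
    · rw [slope_def_field]
      exact div_nonneg (by simpa using hg h'.le) (by linarith)
  · simp [deriv_zero_of_not_differentiableAt h]

open MeasureTheory Set Filter Topology ENNReal in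
lemma my_lintegral_deriv_le {g : ℝ → ℝ} (hg : Monotone g) (hlip : LocallyLipschitz g)
    (c d : ℝ) :
    ∫⁻ x in Ioc c d, ENNReal.ofReal (deriv g x) ≤ ENNReal.ofReal (g d - g c) := by
  set μ := hg.stieltjesFunction.measure with hμ
  have hs : ∀ x, hg.stieltjesFunction x = g x := fun x => by
    rw [hg.stieltjesFunction_eq]
    exact rightLim_eq_of_tendsto
      ((hlip.continuous.tendsto x).mono_left nhdsWithin_le_nhds)
  have hae : (fun x => ENNReal.ofReal (deriv g x)) =ᵐ[volume] μ.rnDeriv volume := by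
    filter_upwards [hg.ae_hasDerivAt, Measure.rnDeriv_ne_top μ volume] with x hx h'x
    rw [hx.deriv, ENNReal.ofReal_toReal h'x]
  calc ∫⁻ x in Ioc c d, ENNReal.ofReal (deriv g x)
      = ∫⁻ x in Ioc c d, μ.rnDeriv volume x := lintegral_congr_ae (ae_restrict_of_ae hae)
    _ ≤ μ (Ioc c d) := Measure.setLIntegral_rnDeriv_le _
    _ = ENNReal.ofReal (g d - g c) := by
        rw [hμ, StieltjesFunction.measure_Ioc, hs, hs]

open MeasureTheory Set Filter Topology ENNReal in
lemma my_holder {f : ℝ → ℝ≥0∞} (hf : Measurable f) {p : ℝ} (hp : 1 < p) (s : Set ℝ) :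
    ∫⁻ x in s, (f x) ^ (1/p) ≤ (∫⁻ x in s, f x) ^ (1/p) * (volume s) ^ (1 - 1/p) := by
  have hp0 : (0:ℝ) < p := lt_trans one_pos hp
  have hpq := Real.HolderConjugate.conjExponent hp
  have key := ENNReal.lintegral_mul_le_Lp_mul_Lq (volume.restrict s) hpq
      ((hf.pow_const (1/p)).aemeasurable) aemeasurable_const
      (f := fun x => f x ^ (1/p)) (g := fun _ => (1:ℝ≥0∞))
  have h1 : ∀ x : ℝ, (f x ^ (1/p)) ^ p = f x := fun x => by
    rw [← ENNReal.rpow_mul, one_div, inv_mul_cancel₀ hp0.ne', ENNReal.rpow_one]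
  simp only [Pi.mul_apply, mul_one, ENNReal.one_rpow, lintegral_one,
    Measure.restrict_apply_univ, h1] at key
  have h2 : 1 / Real.conjExponent p = 1 - 1/p := by
    rw [one_div, ← hpq.one_sub_inv, one_div]
  rwa [h2] at key

open MeasureTheory Set Filter Topology ENNReal in
lemma my_intble {g : ℝ → ℝ} (hg : Monotone g) (hlip : LocallyLipschitz g)
    {p : ℝ} (hp : 1 < p) (c d : ℝ) :
    IntervalIntegrable (fun s => (deriv g s) ^ (1/p)) volume c d := by
  have hp0 : (0:ℝ) < p := lt_trans one_pos hp
  have hmeas : Measurable fun s : ℝ => (deriv g s) ^ (1/p) :=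
    (measurable_deriv g).pow_const _
  rw [intervalIntegrable_iff]
  refine ⟨hmeas.aestronglyMeasurable, ?_⟩
  rw [hasFiniteIntegral_iff_ofReal (ae_of_all _ fun x => Real.rpow_nonneg (my_deriv_nonneg hg x) _)]
  have heq : ∀ x : ℝ, ENNReal.ofReal ((deriv g x)^(1/p)) = (ENNReal.ofReal (deriv g x))^(1/p) :=
    fun x => (ENNReal.ofReal_rpow_of_nonneg (my_deriv_nonneg hg x) (by positivity : (0:ℝ) ≤ 1/p)).symm
  calc ∫⁻ x in uIoc c d, ENNReal.ofReal ((deriv g x)^(1/p))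
      = ∫⁻ x in uIoc c d, (ENNReal.ofReal (deriv g x))^(1/p) := by simp_rw [heq]
    _ ≤ (∫⁻ x in uIoc c d, ENNReal.ofReal (deriv g x)) ^ (1/p) * (volume (uIoc c d)) ^ (1 - 1/p) :=
        my_holder (measurable_deriv g).ennreal_ofReal hp _
    _ < ⊤ := by
        have hb : ∫⁻ x in uIoc c d, ENNReal.ofReal (deriv g x)
            ≤ ENNReal.ofReal (g (c ⊔ d) - g (c ⊓ d)) := by
          rw [uIoc]
          exact my_lintegral_deriv_le hg hlip _ _
        apply ENNReal.mul_lt_top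
        · exact ENNReal.rpow_lt_top_of_nonneg (by positivity)
            (ne_top_of_le_ne_top ENNReal.ofReal_ne_top hb)
        · refine ENNReal.rpow_lt_top_of_nonneg
            (by rw [sub_nonneg, div_le_one hp0]; exact hp.le) ?_
          rw [uIoc, Real.volume_Ioc]
          exact ENNReal.ofReal_ne_top

open MeasureTheory Set Filter Topology ENNReal in
lemma my_key {g : ℝ → ℝ} (hg : Monotone g) (hlip : LocallyLipschitz g)
    {p : ℝ} (hp : 1 < p) {a b : ℝ} (hba : b ≤ a) :
    |∫ s in b..a, (deriv g s) ^ (1/p)| ^ p ≤ (g a - g b) * (a - b) ^ (p - 1) := by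
  have hp0 : (0:ℝ) < p := lt_trans one_pos hp
  have hd := my_deriv_nonneg hg
  set F : ℝ → ℝ≥0∞ := fun x => ENNReal.ofReal (deriv g x) with hF
  have hFmeas : Measurable F := (measurable_deriv g).ennreal_ofReal
  have h1 : ∫ s in b..a, (deriv g s) ^ (1/p)
      = (∫⁻ x in Ioc b a, (F x) ^ (1/p)).toReal := by
    rw [intervalIntegral.integral_of_le hba,
      MeasureTheory.integral_eq_lintegral_of_nonneg_ae
        (ae_of_all _ fun x => Real.rpow_nonneg (hd x) _)
        ((measurable_deriv g).pow_const _).aestronglyMeasurable]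
    congr 1
    exact lintegral_congr fun x => (ENNReal.ofReal_rpow_of_nonneg (hd x) (by positivity : (0:ℝ) ≤ 1/p)).symm
  have h2 : ∫⁻ x in Ioc b a, (F x) ^ (1/p)
      ≤ (ENNReal.ofReal (g a - g b)) ^ (1/p) * (ENNReal.ofReal (a - b)) ^ (1 - 1/p) := by
    refine le_trans (my_holder hFmeas hp _) ?_
    rw [Real.volume_Ioc]
    gcongr
    · exact my_lintegral_deriv_le hg hlip b a
  have hexp : (0:ℝ) ≤ 1 - 1/p := by
    rw [sub_nonneg]
    rw [div_le_one hp0]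
    exact hp.le
  have hfin : ((ENNReal.ofReal (g a - g b)) ^ (1/p) * (ENNReal.ofReal (a - b)) ^ (1 - 1/p)) ≠ ⊤ := by
    apply ENNReal.mul_ne_top
    · exact (ENNReal.rpow_lt_top_of_nonneg (by positivity) ENNReal.ofReal_ne_top).ne
    · exact (ENNReal.rpow_lt_top_of_nonneg hexp ENNReal.ofReal_ne_top).ne
  have h3 : (∫⁻ x in Ioc b a, (F x) ^ (1/p)).toReal
      ≤ (g a - g b) ^ (1/p) * (a - b) ^ (1 - 1/p) := by
    refine le_trans (ENNReal.toReal_mono hfin h2) ?_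
    rw [ENNReal.toReal_mul, ← ENNReal.toReal_rpow, ← ENNReal.toReal_rpow,
      ENNReal.toReal_ofReal (sub_nonneg.2 (hg hba)), ENNReal.toReal_ofReal (sub_nonneg.2 hba)]
  rw [h1, abs_of_nonneg ENNReal.toReal_nonneg]
  calc (∫⁻ x in Ioc b a, (F x) ^ (1/p)).toReal ^ p
      ≤ ((g a - g b) ^ (1/p) * (a - b) ^ (1 - 1/p)) ^ p :=
        Real.rpow_le_rpow ENNReal.toReal_nonneg h3 hp0.le
    _ = (g a - g b) * (a - b) ^ (p - 1) := by
        rw [Real.mul_rpow (Real.rpow_nonneg (sub_nonneg.2 (hg hba)) _)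
            (Real.rpow_nonneg (sub_nonneg.2 hba) _),
          ← Real.rpow_mul (sub_nonneg.2 (hg hba)), ← Real.rpow_mul (sub_nonneg.2 hba),
          one_div, inv_mul_cancel₀ hp0.ne', Real.rpow_one]
        congr 1
        field_simp

theorem stmt2 (g : ℝ → ℝ) (hg : Monotone g) (hlip : LocallyLipschitz g)
    (p : ℝ) (hp : 1 < p)
    (G : ℝ → ℝ) (hG : ∀ t, G t = ∫ s in (0:ℝ)..t, (deriv g s) ^ (1 / p)) :
    ∀ a b : ℝ, |G a - G b| ^ p ≤ |a - b| ^ (p - 2) * (a - b) * (g a - g b) := by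
  have hp0 : (0:ℝ) < p := lt_trans one_pos hp
  have key : ∀ a b : ℝ, b ≤ a → |G a - G b| ^ p ≤ |a - b| ^ (p-2) * (a - b) * (g a - g b) := by
    intro a b hba
    have hGab : G a - G b = ∫ s in b..a, (deriv g s) ^ (1/p) := by
      rw [hG a, hG b]
      exact intervalIntegral.integral_interval_sub_left
        (my_intble hg hlip hp 0 a) (my_intble hg hlip hp 0 b)
    rcases eq_or_lt_of_le hba with heq | hlt
    · subst heq
      simp [Real.zero_rpow hp0.ne']
    · have h := my_key hg hlip hp hba
      rw [hGab]
      refine le_trans h ?_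
      have hab : 0 < a - b := sub_pos.2 hlt
      rw [abs_of_pos hab]
      have h2 : (a-b)^(p-2) * (a-b) = (a-b)^(p-1) := by
        rw [← Real.rpow_add_one hab.ne']
        congr 1
        ring
      rw [h2, mul_comm]
  intro a b
  rcases le_total b a with h | h
  · exact key a b h
  · have h2 := key b a h
    calc |G a - G b| ^ p = |G b - G a| ^ p := by rw [abs_sub_comm]
      _ ≤ |b - a| ^ (p-2) * (b - a) * (g b - g a) := h2
      _ = |a - b| ^ (p-2) * (a - b) * (g a - g b) := by rw [abs_sub_comm]; ring
end
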